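/- If A and B are compatibly shift equivalent with lag m via matrices R, S and path isomorphisms φ_R, φ_S, ψ_A, ψ_B, then the following commutation relations hold automatically: (ψ_A × id_A)∘(id_R × φ_S) = (id_A × ψ_A)∘(φ_R⁻¹ × id_S) and (ψ_B × id_B)∘(id_S × φ_R) = (id_B × ψ_B)∘(φ_S⁻¹ × id_R). -/

import Mathlib

universe u

/-- The edge set of a matrix `F` over `ℕ`: `E_F = { (v,w,n) : n < F v w }`. -/
def Edge {α β : Type u} (F : Matrix α β ℕ) : Type u :=
  {p : α × β × ℕ // p.2.2 < F p.1 p.2.1}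

/-- Source of an edge. -/
def Edge.src {α β : Type u} {F : Matrix α β ℕ} (e : Edge F) : α := e.val.1

/-- Range of an edge. -/
def Edge.rng {α β : Type u} {F : Matrix α β ℕ} (e : Edge F) : β := e.val.2.1

/-- An abstract edge system: a set of "edges" with source and range maps. -/
structure EdgeSys (α β : Type u) : Type (u + 1) where
  E : Type u
  src : E → α
  rng : E → β

/-- The edge system of a matrix over `ℕ`. -/
def esys {α β : Type u} (F : Matrix α β ℕ) : EdgeSys α β :=
  ⟨Edge F, Edge.src, Edge.rng⟩

/-- The product of edge systems: composable pairs of edges. -/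
def EdgeSys.prod {α β γ : Type u} (X : EdgeSys α β) (Y : EdgeSys β γ) : EdgeSys α γ :=
  ⟨{p : X.E × Y.E // X.rng p.1 = Y.src p.2},
   fun p => X.src p.val.1, fun p => Y.rng p.val.2⟩

/-- Powers of an edge system: paths of a given length (`pow 0` = vertices). -/
def EdgeSys.pow {α : Type u} (X : EdgeSys α α) : ℕ → EdgeSys α α
  | 0 => ⟨α, id, id⟩
  | 1 => X
  | n + 2 => X.prod (X.pow (n + 1))

/-- A path isomorphism between edge systems: a source- and range-preserving
bijection. -/
structure PIso {α β : Type u} (X Y : EdgeSys α β) : Type u where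
  e : X.E ≃ Y.E
  src_eq : ∀ x, Y.src (e x) = X.src x
  rng_eq : ∀ x, Y.rng (e x) = X.rng x

/-- Identity path isomorphism. -/
def PIso.refl {α β : Type u} (X : EdgeSys α β) : PIso X X :=
  ⟨Equiv.refl _, fun _ => rfl, fun _ => rfl⟩

/-- Inverse of a path isomorphism. -/
def PIso.symm {α β : Type u} {X Y : EdgeSys α β} (f : PIso X Y) : PIso Y X :=
  ⟨f.e.symm,
   fun y => by rw [← f.src_eq (f.e.symm y), Equiv.apply_symm_apply],
   fun y => by rw [← f.rng_eq (f.e.symm y), Equiv.apply_symm_apply]⟩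

/-- Composition of path isomorphisms. -/
def PIso.trans {α β : Type u} {X Y Z : EdgeSys α β} (f : PIso X Y) (g : PIso Y Z) :
    PIso X Z :=
  ⟨f.e.trans g.e,
   fun x => by rw [Equiv.trans_apply, g.src_eq, f.src_eq],
   fun x => by rw [Equiv.trans_apply, g.rng_eq, f.rng_eq]⟩

/-- Horizontal product `f × g` of path isomorphisms. -/
def PIso.hprod {α β γ : Type u} {X X' : EdgeSys α β} {Y Y' : EdgeSys β γ}
    (f : PIso X X') (g : PIso Y Y') : PIso (X.prod Y) (X'.prod Y') where
  e := Equiv.subtypeEquiv (f.e.prodCongr g.e) (by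
        intro p
        simp only [Equiv.prodCongr_apply, Prod.map]
        rw [f.rng_eq, g.src_eq])
  src_eq := fun x => f.src_eq x.val.1
  rng_eq := fun x => g.rng_eq x.val.2

/-- The associator path isomorphism `(X × Y) × Z ≅ X × (Y × Z)`. -/
def EdgeSys.assoc {α β γ δ : Type u} (X : EdgeSys α β) (Y : EdgeSys β γ)
    (Z : EdgeSys γ δ) : PIso ((X.prod Y).prod Z) (X.prod (Y.prod Z)) where
  e := { toFun := fun p =>
            ⟨(p.val.1.val.1, ⟨(p.val.1.val.2, p.val.2), p.property⟩), p.val.1.property⟩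
         invFun := fun q =>
            ⟨(⟨(q.val.1, q.val.2.val.1), q.property⟩, q.val.2.val.2), q.val.2.property⟩
         left_inv := fun p => rfl
         right_inv := fun q => rfl }
  src_eq := fun _ => rfl
  rng_eq := fun _ => rfl

/-- The iterated path isomorphism `φ^(m)` (with `m = k + 1`), moving an edge of
`R` past `m` edges: `φ^(m) = (φ × id) ∘ (id × φ × id) ∘ ⋯ ∘ (id × φ)`. -/
def PIso.iter {α β : Type u} {X : EdgeSys α α} {Y : EdgeSys β β} {R : EdgeSys α β}
    (φ : PIso (X.prod R) (R.prod Y)) :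
    (k : ℕ) → PIso ((X.pow (k + 1)).prod R) (R.prod (Y.pow (k + 1)))
  | 0 => φ
  | k + 1 =>
      (EdgeSys.assoc X (X.pow (k + 1)) R).trans
        (((PIso.refl X).hprod (φ.iter k)).trans
          ((EdgeSys.assoc X R (Y.pow (k + 1))).symm.trans
            ((φ.hprod (PIso.refl (Y.pow (k + 1)))).trans
              (EdgeSys.assoc R Y (Y.pow (k + 1))))))

/-- The canonical path isomorphism `X^(k+1) × X ≅ X^(k+2)`. -/
def EdgeSys.powShift {α : Type u} (X : EdgeSys α α) :
    (k : ℕ) → PIso ((X.pow (k + 1)).prod X) (X.pow (k + 2))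
  | 0 => PIso.refl (X.prod X)
  | k + 1 =>
      (EdgeSys.assoc X (X.pow (k + 1)) X).trans
        ((PIso.refl X).hprod (X.powShift k))

/-- A compatible shift equivalence of lag `k + 1` between `A` and `B`, via the
matrices `R` and `S`: path isomorphisms `φ_R, φ_S, ψ_A, ψ_B` satisfying
`φ_R^(m) = (id_R × ψ_B) ∘ (ψ_A⁻¹ × id_R)` and
`φ_S^(m) = (id_S × ψ_A) ∘ (ψ_B⁻¹ × id_S)` (with `m = k + 1`). -/
structure CompatSE {V W : Type u} (A : Matrix V V ℕ) (B : Matrix W W ℕ)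
    (R : Matrix V W ℕ) (S : Matrix W V ℕ) (k : ℕ) : Type u where
  φR : PIso ((esys A).prod (esys R)) ((esys R).prod (esys B))
  φS : PIso ((esys B).prod (esys S)) ((esys S).prod (esys A))
  ψA : PIso ((esys R).prod (esys S)) ((esys A).pow (k + 1))
  ψB : PIso ((esys S).prod (esys R)) ((esys B).pow (k + 1))
  compatR : φR.iter k =
    (ψA.symm.hprod (PIso.refl (esys R))).trans
      ((EdgeSys.assoc (esys R) (esys S) (esys R)).trans
        ((PIso.refl (esys R)).hprod ψB))
  compatS : φS.iter k =
    (ψB.symm.hprod (PIso.refl (esys S))).trans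
      ((EdgeSys.assoc (esys S) (esys R) (esys S)).trans
        ((PIso.refl (esys S)).hprod ψA))

/-- A matrix is essential if it has no zero rows and no zero columns. -/
def Essential {V W : Type u} (M : Matrix V W ℕ) : Prop :=
  (∀ v, ∃ w, M v w ≠ 0) ∧ (∀ w, ∃ v, M v w ≠ 0)
section
variable {α β γ δ : Type u}

theorem piso_ext {X Y : EdgeSys α β} {f g : PIso X Y} (h : ∀ x, f.e x = g.e x) : f = g := by
  obtain ⟨fe, fs, fr⟩ := f; obtain ⟨ge, gs, gr⟩ := g
  have : fe = ge := Equiv.ext h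
  subst this; rfl

def hd {X : EdgeSys α α} : {k : ℕ} → (X.pow (k+1)).E → X.E
  | 0, p => p
  | _+1, p => p.val.1

def snoc {X : EdgeSys α α} {k : ℕ} (p : (X.pow (k+1)).E) (x : X.E)
    (h : (X.pow (k+1)).rng p = X.src x) : (X.pow (k+2)).E :=
  (X.powShift k).e ⟨(p, x), h⟩

lemma hd_snoc {X : EdgeSys α α} {k} (p : (X.pow (k+1)).E) (x : X.E) (h) :
    hd (snoc p x h) = hd p := by
  cases k <;> rfl

lemma snoc_rng {X : EdgeSys α α} {k} (p : (X.pow (k+1)).E) (x : X.E) (h) :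
    (X.pow (k+2)).rng (snoc p x h) = X.rng x :=
  (X.powShift k).rng_eq ⟨(p,x),h⟩

lemma snoc_src {X : EdgeSys α α} {k} (p : (X.pow (k+1)).E) (x : X.E) (h) :
    (X.pow (k+2)).src (snoc p x h) = (X.pow (k+1)).src p :=
  (X.powShift k).src_eq ⟨(p,x),h⟩

lemma hd_src {X : EdgeSys α α} {k} (p : (X.pow (k+1)).E) :
    X.src (hd p) = (X.pow (k+1)).src p := by cases k <;> rfl

end
section
variable {α β : Type u}

lemma iter_succ_val {X : EdgeSys α α} {Y : EdgeSys β β} {R' : EdgeSys α β}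
    (φ : PIso (X.prod R') (R'.prod Y)) (k : ℕ)
    (p : ((X.prod (X.pow (k+1))).prod R').E)
    (hq : (X.pow (k+1)).rng p.val.1.val.2 = R'.src p.val.2)
    (hφ : X.rng p.val.1.val.1 = R'.src ((φ.iter k).e ⟨(p.val.1.val.2, p.val.2), hq⟩).val.1)
    (h3 : Y.rng (φ.e ⟨(p.val.1.val.1, ((φ.iter k).e ⟨(p.val.1.val.2, p.val.2), hq⟩).val.1), hφ⟩).val.2
        = (Y.pow (k+1)).src ((φ.iter k).e ⟨(p.val.1.val.2, p.val.2), hq⟩).val.2) :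
    ((φ.iter (k+1)).e p).val =
      ((φ.e ⟨(p.val.1.val.1, ((φ.iter k).e ⟨(p.val.1.val.2, p.val.2), hq⟩).val.1), hφ⟩).val.1,
       ⟨((φ.e ⟨(p.val.1.val.1, ((φ.iter k).e ⟨(p.val.1.val.2, p.val.2), hq⟩).val.1), hφ⟩).val.2,
         ((φ.iter k).e ⟨(p.val.1.val.2, p.val.2), hq⟩).val.2), h3⟩) := rfl

end
section
variable {α β : Type u}

lemma compat_apply {X : EdgeSys α α} {Y : EdgeSys β β} {R' : EdgeSys α β} {S' : EdgeSys β α} {k : ℕ}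
    (φ : PIso (X.prod R') (R'.prod Y))
    (ψ : PIso (R'.prod S') (X.pow (k+1))) (ψ' : PIso (S'.prod R') (Y.pow (k+1)))
    (hc : φ.iter k = (ψ.symm.hprod (PIso.refl R')).trans
      ((EdgeSys.assoc R' S' R').trans ((PIso.refl R').hprod ψ')))
    (q : (R'.prod S').E) (r : R'.E)
    (h : (X.pow (k+1)).rng (ψ.e q) = R'.src r)
    (h' : S'.rng q.val.2 = R'.src r) :
    ((φ.iter k).e ⟨(ψ.e q, r), h⟩).val = (q.val.1, ψ'.e ⟨(q.val.2, r), h'⟩) := by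
  rw [hc]
  have hq : ψ.e.symm (ψ.e q) = q := Equiv.symm_apply_apply _ q
  show (((ψ.e.symm (ψ.e q)).val.1, ψ'.e ⟨((ψ.e.symm (ψ.e q)).val.2, r), _⟩) : _ × _) = _
  refine Prod.ext_iff.mpr ⟨?_, congrArg ψ'.e (Subtype.ext ?_)⟩
  · show (ψ.e.symm (ψ.e q)).val.1 = q.val.1
    rw [hq]
  · show (((ψ.e.symm (ψ.e q)).val.2, r) : _ × _) = (q.val.2, r)
    rw [hq]

end
section
variable {α β : Type u}

lemma iter_snoc {X : EdgeSys α α} {Y : EdgeSys β β} {R' : EdgeSys α β}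
    (φ : PIso (X.prod R') (R'.prod Y)) : ∀ (k : ℕ) (α' : (X.pow (k+1)).E) (a : X.E) (r : R'.E)
    (h₁ : (X.pow (k+1)).rng α' = X.src a)
    (h₅ : X.rng a = R'.src r)
    (h₂ : (X.pow (k+2)).rng (snoc α' a h₁) = R'.src r)
    (h₆ : (X.pow (k+1)).rng α' = R'.src (φ.e ⟨(a,r),h₅⟩).val.1)
    (h₃ : (Y.pow (k+1)).rng ((φ.iter k).e ⟨(α', (φ.e ⟨(a,r),h₅⟩).val.1), h₆⟩).val.2
        = Y.src (φ.e ⟨(a,r),h₅⟩).val.2),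
    ((φ.iter (k+1)).e ⟨(snoc α' a h₁, r), h₂⟩).val =
      (((φ.iter k).e ⟨(α', (φ.e ⟨(a,r),h₅⟩).val.1), h₆⟩).val.1,
       snoc ((φ.iter k).e ⟨(α', (φ.e ⟨(a,r),h₅⟩).val.1), h₆⟩).val.2 (φ.e ⟨(a,r),h₅⟩).val.2 h₃)
  | 0, α', a, r, h₁, h₅, h₂, h₆, h₃ => rfl
  | (k+1), α', a, r, h₁, h₅, h₂, h₆, h₃ => by
    have hΦs : R'.src (φ.e ⟨(a,r),h₅⟩).val.1 = X.src a := φ.src_eq _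
    have h₁' : (X.pow (k+1)).rng α'.val.2 = X.src a := h₁
    have h₂' : (X.pow (k+2)).rng (snoc α'.val.2 a h₁') = R'.src r := by
      rw [snoc_rng]; exact h₅
    have h₆' : (X.pow (k+1)).rng α'.val.2 = R'.src (φ.e ⟨(a,r),h₅⟩).val.1 := by
      rw [hΦs]; exact h₁'
    have h₃' : (Y.pow (k+1)).rng ((φ.iter k).e ⟨(α'.val.2, (φ.e ⟨(a,r),h₅⟩).val.1), h₆'⟩).val.2
        = Y.src (φ.e ⟨(a,r),h₅⟩).val.2 :=
      ((φ.iter k).rng_eq ⟨(α'.val.2, (φ.e ⟨(a,r),h₅⟩).val.1), h₆'⟩).trans (φ.e ⟨(a,r),h₅⟩).property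
    have hIH := iter_snoc φ k α'.val.2 a r h₁' h₅ h₂' h₆' h₃'
    have hT1 : ((φ.iter (k+1)).e ⟨(snoc α'.val.2 a h₁', r), h₂'⟩).val.1
        = ((φ.iter k).e ⟨(α'.val.2, (φ.e ⟨(a,r),h₅⟩).val.1), h₆'⟩).val.1 :=
      congrArg Prod.fst hIH
    have hT2 : ((φ.iter (k+1)).e ⟨(snoc α'.val.2 a h₁', r), h₂'⟩).val.2
        = snoc ((φ.iter k).e ⟨(α'.val.2, (φ.e ⟨(a,r),h₅⟩).val.1), h₆'⟩).val.2
            (φ.e ⟨(a,r),h₅⟩).val.2 h₃' :=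
      congrArg Prod.snd hIH
    have pfX : X.rng α'.val.1
        = R'.src ((φ.iter (k+1)).e ⟨(snoc α'.val.2 a h₁', r), h₂'⟩).val.1 := by
      have hs := (φ.iter (k+1)).src_eq ⟨(snoc α'.val.2 a h₁', r), h₂'⟩
      have : R'.src ((φ.iter (k+1)).e ⟨(snoc α'.val.2 a h₁', r), h₂'⟩).val.1
          = (X.pow (k+2)).src (snoc α'.val.2 a h₁') := hs
      rw [this, snoc_src]
      exact α'.property
    have pfX' : X.rng α'.val.1
        = R'.src ((φ.iter k).e ⟨(α'.val.2, (φ.e ⟨(a,r),h₅⟩).val.1), h₆'⟩).val.1 := by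
      rw [← hT1]; exact pfX
    have hφe : φ.e ⟨(α'.val.1, ((φ.iter (k+1)).e ⟨(snoc α'.val.2 a h₁', r), h₂'⟩).val.1), pfX⟩
        = φ.e ⟨(α'.val.1, ((φ.iter k).e ⟨(α'.val.2, (φ.e ⟨(a,r),h₅⟩).val.1), h₆'⟩).val.1), pfX'⟩ :=
      congrArg φ.e (Subtype.ext (by
        show ((α'.val.1, ((φ.iter (k+1)).e ⟨(snoc α'.val.2 a h₁', r), h₂'⟩).val.1) : _ × _) = _
        rw [hT1]))
    refine Prod.ext_iff.mpr ⟨?_, Subtype.ext (Prod.ext_iff.mpr ⟨?_, ?_⟩)⟩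
    · show (φ.e ⟨(α'.val.1, ((φ.iter (k+1)).e ⟨(snoc α'.val.2 a h₁', r), h₂'⟩).val.1), pfX⟩).val.1
        = _
      rw [hφe]
      rfl
    · show (φ.e ⟨(α'.val.1, ((φ.iter (k+1)).e ⟨(snoc α'.val.2 a h₁', r), h₂'⟩).val.1), pfX⟩).val.2
        = _
      rw [hφe]
      rfl
    · show ((φ.iter (k+1)).e ⟨(snoc α'.val.2 a h₁', r), h₂'⟩).val.2 = _
      rw [hT2]
      rfl

end
section
variable {α β : Type u}

lemma snoc_congr {X : EdgeSys α α} {k : ℕ} {p p' : (X.pow (k+1)).E} (hpp : p = p')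
    (x : X.E) (h : (X.pow (k+1)).rng p = X.src x) (h' : (X.pow (k+1)).rng p' = X.src x) :
    snoc p x h = snoc p' x h' := by subst hpp; rfl

lemma fact1 {X : EdgeSys α α} {Y : EdgeSys β β} {R' : EdgeSys α β} {S' : EdgeSys β α} {k : ℕ}
    (φ : PIso (X.prod R') (R'.prod Y))
    (ψ : PIso (R'.prod S') (X.pow (k+1))) (ψ' : PIso (S'.prod R') (Y.pow (k+1)))
    (hc : φ.iter k = (ψ.symm.hprod (PIso.refl R')).trans
      ((EdgeSys.assoc R' S' R').trans ((PIso.refl R').hprod ψ')))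
    (q : (R'.prod S').E) (a : X.E) (r' : R'.E)
    (hqa : (X.pow (k+1)).rng (ψ.e q) = X.src a)
    (har : X.rng a = R'.src r')
    (Φ : (R'.prod Y).E) (hΦ : Φ = φ.e ⟨(a,r'),har⟩)
    (J : (X.pow (k+2)).E) (hJ : J = snoc (ψ.e q) a hqa)
    (qL : (R'.prod S').E) (hqL : qL = ψ.e.symm J.val.2)
    (pf2 : S'.rng q.val.2 = R'.src Φ.val.1)
    (pf3 : (Y.pow (k+1)).rng (ψ'.e ⟨(q.val.2, Φ.val.1), pf2⟩) = Y.src Φ.val.2)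
    (E : (Y.pow (k+2)).E) (hE : E = snoc (ψ'.e ⟨(q.val.2, Φ.val.1), pf2⟩) Φ.val.2 pf3)
    (pf1 : X.rng J.val.1 = R'.src qL.val.1)
    (pf4 : S'.rng qL.val.2 = R'.src r') :
    (φ.e ⟨(J.val.1, qL.val.1), pf1⟩).val.1 = q.val.1 ∧
    (φ.e ⟨(J.val.1, qL.val.1), pf1⟩).val.2 = E.val.1 ∧
    ψ'.e ⟨(qL.val.2, r'), pf4⟩ = E.val.2 := by
  subst hΦ hJ hqL hE
  -- abbreviations are gone; now raw terms
  have hJr : (X.pow (k+2)).rng (snoc (ψ.e q) a hqa) = R'.src r' := by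
    rw [snoc_rng]; exact har
  have h₆ : (X.pow (k+1)).rng (ψ.e q) = R'.src (φ.e ⟨(a,r'),har⟩).val.1 := by
    rw [show R'.src (φ.e ⟨(a,r'),har⟩).val.1 = X.src a from φ.src_eq _]; exact hqa
  have h₃ : (Y.pow (k+1)).rng ((φ.iter k).e ⟨(ψ.e q, (φ.e ⟨(a,r'),har⟩).val.1), h₆⟩).val.2
      = Y.src (φ.e ⟨(a,r'),har⟩).val.2 :=
    ((φ.iter k).rng_eq _).trans (φ.e ⟨(a,r'),har⟩).property
  have way1 := iter_snoc φ k (ψ.e q) a r' hqa har hJr h₆ h₃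
  have hQ := compat_apply φ ψ ψ' hc q (φ.e ⟨(a,r'),har⟩).val.1 h₆ pf2
  have w1a : ((φ.iter (k+1)).e ⟨(snoc (ψ.e q) a hqa, r'), hJr⟩).val.1 = q.val.1 :=
    (congrArg Prod.fst way1).trans (congrArg Prod.fst hQ)
  have w1b : ((φ.iter (k+1)).e ⟨(snoc (ψ.e q) a hqa, r'), hJr⟩).val.2
      = snoc (ψ'.e ⟨(q.val.2, (φ.e ⟨(a,r'),har⟩).val.1), pf2⟩) (φ.e ⟨(a,r'),har⟩).val.2 pf3 := by
    refine (congrArg Prod.snd way1).trans ?_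
    exact snoc_congr (congrArg Prod.snd hQ) _ _ _
  -- way 2
  have hq2 : (X.pow (k+1)).rng (snoc (ψ.e q) a hqa).val.2 = R'.src r' := hJr
  have hT := compat_apply φ ψ ψ' hc (ψ.e.symm (snoc (ψ.e q) a hqa).val.2) r'
    (by rw [Equiv.apply_symm_apply]; exact hq2) pf4
  have hTin : (⟨(ψ.e (ψ.e.symm (snoc (ψ.e q) a hqa).val.2), r'),
        by rw [Equiv.apply_symm_apply]; exact hq2⟩ :
        ((X.pow (k+1)).prod R').E) = ⟨((snoc (ψ.e q) a hqa).val.2, r'), hq2⟩ :=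
    Subtype.ext (by
      show ((ψ.e (ψ.e.symm (snoc (ψ.e q) a hqa).val.2), r') : _ × _) = _
      rw [Equiv.apply_symm_apply])
  rw [hTin] at hT
  -- hT : ((φ.iter k).e ⟨((snoc (ψ.e q) a hqa).val.2, r'), hq2⟩).val
  --    = ((ψ.e.symm _).val.1, ψ'.e ⟨((ψ.e.symm _).val.2, r'), pf4⟩)
  have pfA : X.rng (snoc (ψ.e q) a hqa).val.1
      = R'.src ((φ.iter k).e ⟨((snoc (ψ.e q) a hqa).val.2, r'), hq2⟩).val.1 := by
    rw [congrArg Prod.fst hT]; exact pf1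
  have way2 : ((φ.iter (k+1)).e ⟨(snoc (ψ.e q) a hqa, r'), hJr⟩).val =
      ((φ.e ⟨((snoc (ψ.e q) a hqa).val.1,
          ((φ.iter k).e ⟨((snoc (ψ.e q) a hqa).val.2, r'), hq2⟩).val.1), pfA⟩).val.1,
       ⟨((φ.e ⟨((snoc (ψ.e q) a hqa).val.1,
          ((φ.iter k).e ⟨((snoc (ψ.e q) a hqa).val.2, r'), hq2⟩).val.1), pfA⟩).val.2,
          ((φ.iter k).e ⟨((snoc (ψ.e q) a hqa).val.2, r'), hq2⟩).val.2),
        (φ.rng_eq _).trans (((φ.iter k).e ⟨((snoc (ψ.e q) a hqa).val.2, r'), hq2⟩).property)⟩) := rfl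
  have hφarg : (⟨((snoc (ψ.e q) a hqa).val.1,
          ((φ.iter k).e ⟨((snoc (ψ.e q) a hqa).val.2, r'), hq2⟩).val.1), pfA⟩ : (X.prod R').E)
      = ⟨((snoc (ψ.e q) a hqa).val.1, (ψ.e.symm (snoc (ψ.e q) a hqa).val.2).val.1), pf1⟩ :=
    Subtype.ext (by
      show (((snoc (ψ.e q) a hqa).val.1,
          ((φ.iter k).e ⟨((snoc (ψ.e q) a hqa).val.2, r'), hq2⟩).val.1) : _ × _) = _
      rw [congrArg Prod.fst hT])
  have hφe := congrArg φ.e hφarg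
  have c1 := congrArg Prod.fst way2
  have c2 := congrArg Prod.snd way2
  have e2 := c2.symm.trans w1b
  refine ⟨((congrArg (fun z => (Subtype.val z).1) hφe).symm).trans (c1.symm.trans w1a), ?_, ?_⟩
  · exact ((congrArg (fun z => (Subtype.val z).2) hφe).symm).trans
      (congrArg (fun z => (Subtype.val z).1) e2)
  · exact (congrArg Prod.snd hT).symm.trans (congrArg (fun z => (Subtype.val z).2) e2)
end
section
variable {α β : Type u}

lemma factLP {X : EdgeSys α α} {Y : EdgeSys β β} {R' : EdgeSys α β} {S' : EdgeSys β α} {k : ℕ}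
    (φ : PIso (X.prod R') (R'.prod Y))
    (ψ : PIso (R'.prod S') (X.pow (k+1))) (ψ' : PIso (S'.prod R') (Y.pow (k+1)))
    (hc : φ.iter k = (ψ.symm.hprod (PIso.refl R')).trans
      ((EdgeSys.assoc R' S' R').trans ((PIso.refl R').hprod ψ')))
    (q : (R'.prod S').E) (ρ : R'.E)
    (h' : S'.rng q.val.2 = R'.src ρ) :
    ∃ (x : R'.E) (hx : X.rng (hd (ψ.e q)) = R'.src x),
      (φ.e ⟨(hd (ψ.e q), x), hx⟩).val = (q.val.1, hd (ψ'.e ⟨(q.val.2, ρ), h'⟩)) := by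
  have h : (X.pow (k+1)).rng (ψ.e q) = R'.src ρ := (ψ.rng_eq q).trans h'
  have compat := compat_apply φ ψ ψ' hc q ρ h h'
  match k, ψ, ψ', hc, h, compat with
  | 0, ψ, ψ', hc, h, compat =>
    exact ⟨ρ, h, compat⟩
  | (j+1), ψ, ψ', hc, h, compat =>
    refine ⟨((φ.iter j).e ⟨((ψ.e q).val.2, ρ), h⟩).val.1,
      (ψ.e q).property.trans ((φ.iter j).src_eq ⟨((ψ.e q).val.2, ρ), h⟩).symm, ?_⟩
    have c1 := congrArg Prod.fst compat
    have c2 := congrArg (fun z => (Prod.snd z).val.1) compat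
    refine Prod.ext_iff.mpr ⟨?_, ?_⟩
    · exact c1
    · exact c2

end
section
variable {V W : Type u}

lemma exists_path {A : Matrix V V ℕ} (hA : ∀ v, ∃ w, A v w ≠ 0) :
    ∀ (n : ℕ) (v : V), ∃ p : ((esys A).pow (n+1)).E, ((esys A).pow (n+1)).src p = v := by
  intro n
  induction n with
  | zero =>
    intro v
    obtain ⟨w, hw⟩ := hA v
    exact ⟨⟨(v, w, 0), Nat.pos_of_ne_zero hw⟩, rfl⟩
  | succ n IH =>
    intro v
    obtain ⟨w, hw⟩ := hA v
    obtain ⟨p, hp⟩ := IH w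
    exact ⟨⟨(⟨(v, w, 0), Nat.pos_of_ne_zero hw⟩, p), hp.symm⟩, rfl⟩

lemma exists_hd {A : Matrix V V ℕ} (hA : ∀ v, ∃ w, A v w ≠ 0) (k : ℕ) (a : Edge A) :
    ∃ α : ((esys A).pow (k+1)).E, hd α = a := by
  cases k with
  | zero => exact ⟨a, rfl⟩
  | succ k =>
    obtain ⟨p, hp⟩ := exists_path hA k ((esys A).rng a)
    exact ⟨⟨(a, p), hp.symm⟩, rfl⟩

lemma exists_from {β : Type u} {A : Matrix V V ℕ} {R' : EdgeSys V β} {S' : EdgeSys β V} {k : ℕ}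
    (ψ : PIso (R'.prod S') ((esys A).pow (k+1))) (hA : ∀ v, ∃ w, A v w ≠ 0) (v : V) :
    ∃ ρ : R'.E, R'.src ρ = v := by
  obtain ⟨p, hp⟩ := exists_path hA k v
  refine ⟨(ψ.e.symm p).val.1, ?_⟩
  have h1 := ψ.src_eq (ψ.e.symm p)
  rw [Equiv.apply_symm_apply] at h1
  exact h1.symm.trans hp

end
section
variable {V W : Type u}

lemma mainlem (A : Matrix V V ℕ) (B : Matrix W W ℕ)
    (R : Matrix V W ℕ) (S : Matrix W V ℕ) (k : ℕ)
    (hA : Essential A) (hB : Essential B) (c : CompatSE A B R S k) :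
    (((PIso.refl (esys R)).hprod c.φS).trans
        ((EdgeSys.assoc (esys R) (esys S) (esys A)).symm.trans
          ((c.ψA.hprod (PIso.refl (esys A))).trans ((esys A).powShift k)))) =
      (EdgeSys.assoc (esys R) (esys B) (esys S)).symm.trans
        ((c.φR.symm.hprod (PIso.refl (esys S))).trans
          ((EdgeSys.assoc (esys A) (esys R) (esys S)).trans
            ((PIso.refl (esys A)).hprod c.ψA))) := by
  apply piso_ext
  rintro ⟨⟨r, bs⟩, hx⟩
  let F := c.φS.e bs
  have pr1 : (esys R).rng r = (esys S).src F.val.1 := hx.trans (c.φS.src_eq bs).symm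
  let qx : ((esys R).prod (esys S)).E := ⟨(r, F.val.1), pr1⟩
  have pr2 : ((esys A).pow (k+1)).rng (c.ψA.e qx) = (esys A).src F.val.2 :=
    (c.ψA.rng_eq qx).trans F.property
  let J := snoc (c.ψA.e qx) F.val.2 pr2
  -- choose extensions
  obtain ⟨αh, hαh⟩ := exists_hd hA.1 k F.val.2
  let qhat := c.ψA.e.symm αh
  have hψqhat : c.ψA.e qhat = αh := Equiv.apply_symm_apply _ _
  obtain ⟨ρ, hρ⟩ := exists_from c.ψA hA.1 ((esys S).rng qhat.val.2)
  have h' : (esys S).rng qhat.val.2 = (esys R).src ρ := hρ.symm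
  obtain ⟨x₀, hx₀, eq0⟩ := factLP c.φR c.ψA c.ψB c.compatR qhat ρ h'
  have hda : hd (c.ψA.e qhat) = F.val.2 := by rw [hψqhat, hαh]
  have hx' : (esys A).rng F.val.2 = (esys R).src x₀ := by rw [← hda]; exact hx₀
  let Φ := c.φR.e ⟨(F.val.2, x₀), hx'⟩
  have hΦarg : (⟨(F.val.2, x₀), hx'⟩ : ((esys A).prod (esys R)).E)
      = ⟨(hd (c.ψA.e qhat), x₀), hx₀⟩ :=
    Subtype.ext (by
      show ((F.val.2, x₀) : _ × _) = (hd (c.ψA.e qhat), x₀)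
      rw [hda])
  have eqΦ : Φ.val = (qhat.val.1, hd (c.ψB.e ⟨(qhat.val.2, ρ), h'⟩)) := by
    show (c.φR.e ⟨(F.val.2, x₀), hx'⟩).val = _
    rw [hΦarg]; exact eq0
  -- fact1, A-side
  let qL := c.ψA.e.symm J.val.2
  have pf2 : (esys S).rng qx.val.2 = (esys R).src Φ.val.1 :=
    F.property.trans (c.φR.src_eq ⟨(F.val.2, x₀), hx'⟩).symm
  have pf3 : ((esys B).pow (k+1)).rng (c.ψB.e ⟨(qx.val.2, Φ.val.1), pf2⟩)
      = (esys B).src Φ.val.2 := (c.ψB.rng_eq _).trans Φ.property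
  let E := snoc (c.ψB.e ⟨(qx.val.2, Φ.val.1), pf2⟩) Φ.val.2 pf3
  have pf1 : (esys A).rng J.val.1 = (esys R).src qL.val.1 := by
    refine J.property.trans ?_
    have h1 := c.ψA.src_eq qL
    rw [Equiv.apply_symm_apply] at h1
    exact h1
  have pf4 : (esys S).rng qL.val.2 = (esys R).src x₀ := by
    have h1 := c.ψA.rng_eq qL
    rw [Equiv.apply_symm_apply] at h1
    refine h1.symm.trans ?_
    exact (snoc_rng (c.ψA.e qx) F.val.2 pr2).trans hx'
  obtain ⟨f1, f2, f3⟩ := fact1 c.φR c.ψA c.ψB c.compatR qx F.val.2 x₀ pr2 hx'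
    Φ rfl J rfl qL rfl pf2 pf3 E rfl pf1 pf4
  -- choices, B-side
  obtain ⟨σ, hσ⟩ := exists_from c.ψB hB.1 ((esys R).rng ρ)
  have h'' : (esys R).rng ρ = (esys S).src σ := hσ.symm
  obtain ⟨y₀, hy₀, eqS⟩ := factLP c.φS c.ψB c.ψA c.compatS ⟨(qhat.val.2, ρ), h'⟩ σ h''
  have har' : (esys B).rng Φ.val.2 = (esys S).src y₀ := by
    rw [show Φ.val.2 = hd (c.ψB.e ⟨(qhat.val.2, ρ), h'⟩) from congrArg Prod.snd eqΦ]
    exact hy₀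
  let Φ' := c.φS.e ⟨(Φ.val.2, y₀), har'⟩
  have eqΦ' : Φ'.val = (qhat.val.2, hd (c.ψA.e ⟨(ρ, σ), h''⟩)) := by
    show (c.φS.e ⟨(Φ.val.2, y₀), har'⟩).val = _
    rw [show (⟨(Φ.val.2, y₀), har'⟩ : ((esys B).prod (esys S)).E)
        = ⟨(hd (c.ψB.e ⟨(qhat.val.2, ρ), h'⟩), y₀), hy₀⟩ from
      Subtype.ext (by
        show ((Φ.val.2, y₀) : _ × _) = (hd (c.ψB.e ⟨((qhat).val.2, ρ), h'⟩), y₀)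
        rw [congrArg Prod.snd eqΦ])]
    exact eqS
  -- fact1, B-side
  let qM := c.ψB.e.symm E.val.2
  have pf2' : (esys R).rng Φ.val.1 = (esys S).src Φ'.val.1 :=
    Φ.property.trans (c.φS.src_eq ⟨(Φ.val.2, y₀), har'⟩).symm
  have pf3' : ((esys A).pow (k+1)).rng (c.ψA.e ⟨(Φ.val.1, Φ'.val.1), pf2'⟩)
      = (esys A).src Φ'.val.2 := (c.ψA.rng_eq _).trans Φ'.property
  let E' := snoc (c.ψA.e ⟨(Φ.val.1, Φ'.val.1), pf2'⟩) Φ'.val.2 pf3'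
  have pf1' : (esys B).rng E.val.1 = (esys S).src qM.val.1 := by
    refine E.property.trans ?_
    have h1 := c.ψB.src_eq qM
    rw [Equiv.apply_symm_apply] at h1
    exact h1
  have pf4' : (esys R).rng qM.val.2 = (esys S).src y₀ := by
    have h1 := c.ψB.rng_eq qM
    rw [Equiv.apply_symm_apply] at h1
    refine h1.symm.trans ?_
    exact (snoc_rng _ _ pf3).trans har'
  obtain ⟨g1, g2, g3⟩ := fact1 c.φS c.ψB c.ψA c.compatS ⟨(qx.val.2, Φ.val.1), pf2⟩
    Φ.val.2 y₀ pf3 har' Φ' rfl E rfl qM rfl pf2' pf3' E' rfl pf1' pf4'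
  -- key equalities
  have hqM : qM = ⟨(qL.val.2, x₀), pf4⟩ := by
    show c.ψB.e.symm E.val.2 = _
    rw [← f3]
    exact c.ψB.e.symm_apply_apply _
  have hE'1 : E'.val.1 = F.val.2 := by
    have h1 : (⟨(Φ.val.1, Φ'.val.1), pf2'⟩ : ((esys R).prod (esys S)).E) = qhat := by
      refine Subtype.ext ?_
      show ((Φ.val.1, Φ'.val.1) : _ × _) = qhat.val
      rw [congrArg Prod.fst eqΦ, congrArg Prod.fst eqΦ']
    have h2 : hd E' = hd (c.ψA.e ⟨(Φ.val.1, Φ'.val.1), pf2'⟩) := hd_snoc _ _ _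
    refine h2.trans ?_
    rw [h1]
    exact hda
  have hφSval : (c.φS.e ⟨(E.val.1, qM.val.1), pf1'⟩).val = F.val :=
    Prod.ext_iff.mpr ⟨g1, g2.trans hE'1⟩
  have hbs : (⟨(E.val.1, qM.val.1), pf1'⟩ : ((esys B).prod (esys S)).E) = bs :=
    c.φS.e.injective (Subtype.ext hφSval)
  have hEb : E.val.1 = bs.val.1 := congrArg (fun z => (Subtype.val z).1) hbs
  have hqMs : qM.val.1 = bs.val.2 := congrArg (fun z => (Subtype.val z).2) hbs
  have hqLs : qL.val.2 = bs.val.2 :=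
    (congrArg (fun z => (Subtype.val z).1) hqM).symm.trans hqMs
  -- A-side conclusion
  have hφRval : (c.φR.e ⟨(J.val.1, qL.val.1), pf1⟩).val = ((r, bs.val.1) : _ × _) :=
    Prod.ext_iff.mpr ⟨f1, f2.trans hEb⟩
  have hφR2 : c.φR.e ⟨(J.val.1, qL.val.1), pf1⟩
      = c.φR.e (c.φR.e.symm ⟨(r, bs.val.1), hx⟩) := by
    refine Eq.trans ?_ (Equiv.apply_symm_apply c.φR.e _).symm
    exact Subtype.ext hφRval
  have hG : (⟨(J.val.1, qL.val.1), pf1⟩ : ((esys A).prod (esys R)).E)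
      = c.φR.e.symm ⟨(r, bs.val.1), hx⟩ := c.φR.e.injective hφR2
  -- final assembly
  have pr3 : (esys R).rng (c.φR.e.symm ⟨(r, bs.val.1), hx⟩).val.2 = (esys S).src bs.val.2 := by
    have h1 := c.φR.rng_eq (c.φR.e.symm ⟨(r, bs.val.1), hx⟩)
    replace h1 := (congrArg ((esys R).prod (esys B)).rng (Equiv.apply_symm_apply c.φR.e _)).symm.trans h1
    exact h1.symm.trans bs.property
  have pr4 : (esys A).rng (c.φR.e.symm ⟨(r, bs.val.1), hx⟩).val.1
      = ((esys A).pow (k+1)).src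
        (c.ψA.e ⟨((c.φR.e.symm ⟨(r, bs.val.1), hx⟩).val.2, bs.val.2), pr3⟩) :=
    (c.φR.e.symm ⟨(r, bs.val.1), hx⟩).property.trans
      (c.ψA.src_eq ⟨((c.φR.e.symm ⟨(r, bs.val.1), hx⟩).val.2, bs.val.2), pr3⟩).symm
  show J = ⟨((c.φR.e.symm ⟨(r, bs.val.1), hx⟩).val.1,
      c.ψA.e ⟨((c.φR.e.symm ⟨(r, bs.val.1), hx⟩).val.2, bs.val.2), pr3⟩), pr4⟩
  refine Subtype.ext (Prod.ext_iff.mpr ⟨?_, ?_⟩)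
  · exact congrArg (fun z => (Subtype.val z).1) hG
  · have harg : (⟨((c.φR.e.symm ⟨(r, bs.val.1), hx⟩).val.2, bs.val.2), pr3⟩ :
        ((esys R).prod (esys S)).E) = qL := by
      refine Subtype.ext ?_
      show (((c.φR.e.symm ⟨(r, bs.val.1), hx⟩).val.2, bs.val.2) : _ × _) = qL.val
      rw [← congrArg (fun z => (Subtype.val z).2) hG, ← hqLs]
    refine Eq.trans ?_ (congrArg c.ψA.e harg).symm
    exact (Equiv.apply_symm_apply c.ψA.e (J.val.2)).symm

end

/-- for essential matrices `A`, `B`, in any compatible shift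
equivalence the relations
`(ψ_A × id_A) ∘ (id_R × φ_S) = (id_A × ψ_A) ∘ (φ_R⁻¹ × id_S)` and
`(ψ_B × id_B) ∘ (id_S × φ_R) = (id_B × ψ_B) ∘ (φ_S⁻¹ × id_R)`
hold automatically (with the canonical identification `A^m × A ≅ A^{m+1}`). -/
theorem compatSE_auto_relations {V W : Type}
    (A : Matrix V V ℕ) (B : Matrix W W ℕ)
    (R : Matrix V W ℕ) (S : Matrix W V ℕ) (k : ℕ)
    (hA : Essential A) (hB : Essential B)
    (c : CompatSE A B R S k) :
    (((PIso.refl (esys R)).hprod c.φS).trans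
        ((EdgeSys.assoc (esys R) (esys S) (esys A)).symm.trans
          ((c.ψA.hprod (PIso.refl (esys A))).trans ((esys A).powShift k))) =
      (EdgeSys.assoc (esys R) (esys B) (esys S)).symm.trans
        ((c.φR.symm.hprod (PIso.refl (esys S))).trans
          ((EdgeSys.assoc (esys A) (esys R) (esys S)).trans
            ((PIso.refl (esys A)).hprod c.ψA)))) ∧
    (((PIso.refl (esys S)).hprod c.φR).trans
        ((EdgeSys.assoc (esys S) (esys R) (esys B)).symm.trans
          ((c.ψB.hprod (PIso.refl (esys B))).trans ((esys B).powShift k))) =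
      (EdgeSys.assoc (esys S) (esys A) (esys R)).symm.trans
        ((c.φS.symm.hprod (PIso.refl (esys R))).trans
          ((EdgeSys.assoc (esys B) (esys S) (esys R)).trans
            ((PIso.refl (esys B)).hprod c.ψB)))) := by
  refine ⟨mainlem A B R S k hA hB c, ?_⟩
  exact mainlem B A S R k hB hA ⟨c.φS, c.φR, c.ψB, c.ψA, c.compatS, c.compatR⟩
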